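/- Fix integers m,n,L ≥ 1 and multiplexing gains r = (r_1,...,r_L) with ∑_{i∈S} r_i < min(|S|m, n) for every nonempty S ⊆ {1,...,L}. Define D(r,p) = min over nonempty S of G_{|S|m,n}(∑_{i∈S} r_i, p) for a common power exponent p > 0, and the recursion C_j(r) = 0 for j=0 and C_j(r) = D(r, 1 + C_{j-1}(r)) for j ≥ 1. Then the sequence (C_j(r))_{j≥0} is strictly increasing. -/

import Mathlib

open Finset

noncomputable def G (m n : ℕ) (r p : ℝ) : ℝ :=
  sInf { s : ℝ | ∃ α : Fin (min m n) → ℝ,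
    (∀ i j : Fin (min m n), i ≤ j → α j ≤ α i) ∧
    (∀ i, 0 ≤ α i) ∧
    (∑ i, max (p - α i) 0) ≤ r ∧
    s = ∑ i : Fin (min m n), ((2 * (i : ℝ) + 1) + |(m : ℝ) - (n : ℝ)|) * α i }

noncomputable def D (L m n : ℕ) (r : Fin L → ℝ) (p : ℝ) : ℝ :=
  sInf { d : ℝ | ∃ S : Finset (Fin L), S.Nonempty ∧
    d = G (S.card * m) n (∑ i ∈ S, r i) p }

namespace Stmt5Aux

def Gset (m n : ℕ) (r p : ℝ) : Set ℝ :=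
  { s : ℝ | ∃ α : Fin (min m n) → ℝ,
    (∀ i j : Fin (min m n), i ≤ j → α j ≤ α i) ∧
    (∀ i, 0 ≤ α i) ∧
    (∑ i, max (p - α i) 0) ≤ r ∧
    s = ∑ i : Fin (min m n), ((2 * (i : ℝ) + 1) + |(m : ℝ) - (n : ℝ)|) * α i }

lemma G_eq (m n : ℕ) (r p : ℝ) : G m n r p = sInf (Gset m n r p) := rfl

lemma coef_ge_one (m n : ℕ) (i : Fin (min m n)) :
    (1:ℝ) ≤ (2 * (i : ℝ) + 1) + |(m : ℝ) - (n : ℝ)| := by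
  have h1 : (0:ℝ) ≤ (i:ℝ) := by positivity
  have h2 : (0:ℝ) ≤ |(m:ℝ) - (n:ℝ)| := abs_nonneg _
  linarith

lemma Gset_nonempty {m n : ℕ} {r p : ℝ} (hp : 0 ≤ p) (hr : 0 ≤ r) :
    (Gset m n r p).Nonempty := by
  refine ⟨_, fun _ => p, fun _ _ _ => le_rfl, fun _ => hp, ?_, rfl⟩
  simp [hr]

lemma Gset_nonneg {m n : ℕ} {r p : ℝ} : ∀ s ∈ Gset m n r p, (0:ℝ) ≤ s := by
  rintro s ⟨α, hmono, hα0, hsum, rfl⟩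
  refine Finset.sum_nonneg fun i _ => mul_nonneg ?_ (hα0 i)
  linarith [coef_ge_one m n i]

lemma Gset_bddBelow {m n : ℕ} {r p : ℝ} : BddBelow (Gset m n r p) :=
  ⟨0, fun s hs => Gset_nonneg s hs⟩

lemma Gset_lb {m n : ℕ} {r p : ℝ} :
    ∀ s ∈ Gset m n r p, ((min m n : ℕ):ℝ) * p - r ≤ s := by
  rintro s ⟨α, hmono, hα0, hsum, rfl⟩
  have h2 : ∀ i : Fin (min m n), p - max (p - α i) 0 ≤ α i := fun i => by
    have := le_max_left (p - α i) 0; linarith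
  have h1 : ∀ i : Fin (min m n), α i ≤ ((2 * (i : ℝ) + 1) + |(m : ℝ) - (n : ℝ)|) * α i :=
    fun i => le_mul_of_one_le_left (hα0 i) (coef_ge_one m n i)
  have e : ∑ i : Fin (min m n), (p - max (p - α i) 0)
      = ((min m n : ℕ):ℝ) * p - ∑ i : Fin (min m n), max (p - α i) 0 := by
    rw [Finset.sum_sub_distrib, Finset.sum_const, Finset.card_univ, Fintype.card_fin,
      nsmul_eq_mul]
  have hA : ((min m n : ℕ):ℝ) * p - r ≤ ∑ i : Fin (min m n), (p - max (p - α i) 0) := by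
    rw [e]; linarith
  calc ((min m n : ℕ):ℝ) * p - r
      ≤ ∑ i : Fin (min m n), (p - max (p - α i) 0) := hA
    _ ≤ ∑ i : Fin (min m n), α i := Finset.sum_le_sum fun i _ => h2 i
    _ ≤ _ := Finset.sum_le_sum fun i _ => h1 i

lemma G_ge {m n : ℕ} {r p : ℝ} (hp : 0 ≤ p) (hr : 0 ≤ r) :
    ((min m n : ℕ):ℝ) * p - r ≤ G m n r p := by
  rw [G_eq]
  exact le_csInf (Gset_nonempty hp hr) Gset_lb

lemma G_nonneg {m n : ℕ} {r p : ℝ} (hp : 0 ≤ p) (hr : 0 ≤ r) : 0 ≤ G m n r p := by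
  rw [G_eq]
  exact le_csInf (Gset_nonempty hp hr) Gset_nonneg

lemma G_lt {m n : ℕ} {r p p' : ℝ} (hr0 : 0 ≤ r) (hp : 0 < p) (hpp : p < p')
    (hrk : r < ((min m n : ℕ):ℝ) * p') :
    G m n r p < G m n r p' := by
  have hp' : 0 < p' := hp.trans hpp
  set k : ℝ := ((min m n : ℕ):ℝ) with hk
  set q : ℝ := (p' - p) / p' with hq
  have hq0 : 0 < q := div_pos (by linarith) hp'
  have hq1 : q ≤ 1 := by rw [hq, div_le_one hp']; linarith
  have hqp' : q * p' = p' - p := by rw [hq]; field_simp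
  set δ : ℝ := q * (k * p' - r) with hδdef
  have hδ : 0 < δ := mul_pos hq0 (by linarith)
  have key : G m n r p + δ ≤ G m n r p' := by
    rw [G_eq m n r p']
    refine le_csInf (Gset_nonempty hp'.le hr0) ?_
    rintro s' ⟨α, hmono, hα0, hsum, rfl⟩
    set c : Fin (min m n) → ℝ := fun i => (2 * (i : ℝ) + 1) + |(m : ℝ) - (n : ℝ)| with hc
    set β : Fin (min m n) → ℝ := fun i => max (α i - (p' - p)) 0 with hβ
    have hβmem : (∑ i : Fin (min m n), c i * β i) ∈ Gset m n r p := by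
      refine ⟨β, ?_, fun i => le_max_right _ _, ?_, rfl⟩
      · intro i j hij
        exact max_le_max (by linarith [hmono i j hij]) le_rfl
      · refine le_trans (Finset.sum_le_sum fun i _ => ?_) hsum
        rcases le_total (α i) (p' - p) with h | h
        · have hβi : β i = 0 := max_eq_right (by linarith)
          rw [hβi, sub_zero, max_eq_left hp.le]
          exact le_max_of_le_left (by linarith)
        · have hβi : β i = α i - (p' - p) := max_eq_left (by linarith)
          rw [hβi]
          have : p - (α i - (p' - p)) = p' - α i := by ring
          rw [this]
    have hGle : G m n r p ≤ ∑ i : Fin (min m n), c i * β i := by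
      rw [G_eq]; exact csInf_le Gset_bddBelow hβmem
    have hterm : ∀ i : Fin (min m n),
        c i * β i + q * (p' - max (p' - α i) 0) ≤ c i * α i := by
      intro i
      have hci : 1 ≤ c i := coef_ge_one m n i
      have hM0 : 0 ≤ max (p' - α i) 0 := le_max_right _ _
      have hMge : p' - α i ≤ max (p' - α i) 0 := le_max_left _ _
      rcases le_total (α i) (p' - p) with h | h
      · have hβi : β i = 0 := max_eq_right (by linarith)
        have hM : max (p' - α i) 0 = p' - α i := max_eq_left (by linarith)
        rw [hβi, hM, mul_zero, zero_add]
        have h1 : q * α i ≤ 1 * α i := mul_le_mul_of_nonneg_right hq1 (hα0 i)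
        have h2 : 1 * α i ≤ c i * α i := mul_le_mul_of_nonneg_right hci (hα0 i)
        calc q * (p' - (p' - α i)) = q * α i := by ring_nf
          _ ≤ c i * α i := by linarith
      · have hβi : β i = α i - (p' - p) := max_eq_left (by linarith)
        rw [hβi]
        have h1 : q * (p' - max (p' - α i) 0) ≤ q * p' :=
          mul_le_mul_of_nonneg_left (by linarith) hq0.le
        have h2 : (1:ℝ) * (p' - p) ≤ c i * (p' - p) :=
          mul_le_mul_of_nonneg_right hci (by linarith)
        nlinarith [hqp']
    have hsum2 : ∑ i : Fin (min m n), (c i * β i + q * (p' - max (p' - α i) 0))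
        ≤ ∑ i : Fin (min m n), c i * α i := Finset.sum_le_sum fun i _ => hterm i
    have e : ∑ i : Fin (min m n), (c i * β i + q * (p' - max (p' - α i) 0))
        = (∑ i : Fin (min m n), c i * β i)
          + q * (k * p' - ∑ i : Fin (min m n), max (p' - α i) 0) := by
      rw [Finset.sum_add_distrib, ← Finset.mul_sum, Finset.sum_sub_distrib,
        Finset.sum_const, Finset.card_univ, Fintype.card_fin, nsmul_eq_mul]
    have hδle : δ ≤ q * (k * p' - ∑ i : Fin (min m n), max (p' - α i) 0) := by
      rw [hδdef]
      exact mul_le_mul_of_nonneg_left (by linarith) hq0.le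
    linarith [hsum2, e ▸ hsum2]
  linarith

def Dset (L m n : ℕ) (r : Fin L → ℝ) (p : ℝ) : Set ℝ :=
  { d : ℝ | ∃ S : Finset (Fin L), S.Nonempty ∧
    d = G (S.card * m) n (∑ i ∈ S, r i) p }

lemma D_eq (L m n : ℕ) (r : Fin L → ℝ) (p : ℝ) : D L m n r p = sInf (Dset L m n r p) := rfl

lemma Dset_finite (L m n : ℕ) (r : Fin L → ℝ) (p : ℝ) : (Dset L m n r p).Finite := by
  have : Dset L m n r p ⊆
      (fun S : Finset (Fin L) => G (S.card * m) n (∑ i ∈ S, r i) p) '' Set.univ := by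
    rintro d ⟨S, _, rfl⟩
    exact ⟨S, Set.mem_univ _, rfl⟩
  exact Set.Finite.subset (Set.finite_univ.image _) this

lemma Dset_nonempty {L m n : ℕ} (hL : 1 ≤ L) (r : Fin L → ℝ) (p : ℝ) :
    (Dset L m n r p).Nonempty := by
  have : (Finset.univ : Finset (Fin L)).Nonempty := ⟨⟨0, hL⟩, Finset.mem_univ _⟩
  exact ⟨_, Finset.univ, this, rfl⟩

lemma D_mem {L m n : ℕ} (hL : 1 ≤ L) (r : Fin L → ℝ) (p : ℝ) :
    D L m n r p ∈ Dset L m n r p := by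
  rw [D_eq]
  exact Set.Nonempty.csInf_mem (Dset_nonempty hL r p) (Dset_finite L m n r p)

end Stmt5Aux

open Stmt5Aux in
theorem stmt5 (L m n : ℕ) (hL : 1 ≤ L) (hm : 1 ≤ m) (hn : 1 ≤ n)
    (r : Fin L → ℝ) (hr0 : ∀ i, 0 ≤ r i)
    (hr : ∀ S : Finset (Fin L), S.Nonempty → ∑ i ∈ S, r i < ((min (S.card * m) n : ℕ) : ℝ))
    (C : ℕ → ℝ) (hC0 : C 0 = 0) (hC : ∀ j, C (j + 1) = D L m n r (1 + C j)) :
    StrictMono C := by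
  -- basic facts
  have hrS0 : ∀ S : Finset (Fin L), 0 ≤ ∑ i ∈ S, r i :=
    fun S => Finset.sum_nonneg fun i _ => hr0 i
  have hk1 : ∀ S : Finset (Fin L), S.Nonempty → 1 ≤ min (S.card * m) n := by
    intro S hS
    have h1 : 1 ≤ S.card := Finset.one_le_card.mpr hS
    exact le_min (Nat.mul_pos h1 hm) hn
  have Dbdd : ∀ p : ℝ, BddBelow (Dset L m n r p) ∨ True := fun _ => Or.inr trivial
  -- D is bounded below by 0 for p ≥ 0
  have hDbdd : ∀ p : ℝ, 0 ≤ p → BddBelow (Dset L m n r p) := by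
    intro p hp
    refine ⟨0, ?_⟩
    rintro d ⟨S, hS, rfl⟩
    exact G_nonneg hp (hrS0 S)
  -- D strictly increasing for 1 ≤ p < p'
  have hDmono : ∀ p p' : ℝ, 1 ≤ p → p < p' → D L m n r p < D L m n r p' := by
    intro p p' hp hpp
    obtain ⟨S, hS, hSeq⟩ := D_mem hL r p'
    have hk : (1:ℝ) ≤ ((min (S.card * m) n : ℕ):ℝ) := by exact_mod_cast hk1 S hS
    have hrk : ∑ i ∈ S, r i < ((min (S.card * m) n : ℕ):ℝ) * p' := by
      have := hr S hS
      nlinarith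
    have h1 : G (S.card * m) n (∑ i ∈ S, r i) p < G (S.card * m) n (∑ i ∈ S, r i) p' :=
      G_lt (hrS0 S) (by linarith) hpp hrk
    have h2 : D L m n r p ≤ G (S.card * m) n (∑ i ∈ S, r i) p := by
      rw [D_eq]
      exact csInf_le (hDbdd p (by linarith)) ⟨S, hS, rfl⟩
    rw [hSeq]; linarith
  -- D(1) > 0
  have hD1 : 0 < D L m n r 1 := by
    obtain ⟨S, hS, hSeq⟩ := D_mem hL r 1
    have hk : (1:ℝ) ≤ ((min (S.card * m) n : ℕ):ℝ) := by exact_mod_cast hk1 S hS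
    have := G_ge (m := S.card * m) (n := n) (r := ∑ i ∈ S, r i) (p := 1)
      zero_le_one (hrS0 S)
    have hlt := hr S hS
    rw [hSeq]
    have : ((min (S.card * m) n : ℕ):ℝ) * 1 - ∑ i ∈ S, r i
        ≤ G (S.card * m) n (∑ i ∈ S, r i) 1 := this
    linarith
  -- main induction
  have main : ∀ j, 0 ≤ C j ∧ C j < C (j + 1) := by
    intro j
    induction j with
    | zero =>
      constructor
      · exact le_of_eq hC0.symm
      · rw [hC0, hC 0, hC0]
        simpa using hD1
    | succ j ih =>
      obtain ⟨h0, hlt⟩ := ih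
      refine ⟨by linarith, ?_⟩
      have h := hDmono (1 + C j) (1 + C (j + 1)) (by linarith) (by linarith)
      rw [← hC j, ← hC (j + 1)] at h
      exact h
  exact strictMono_nat_of_lt_succ fun j => (main j).2
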